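/- arXiv:2604.04907 — 4 statements merged into one kernel-verified Lean document; each statement's English description precedes it below -/
import Mathlib

section
/- Let k, t ≥ 2 be integers and let G_{k,t} be the sequential join of t copies of the discrete (edgeless) graph D_k on k vertices. Then gpn(G_{k,t}) = (1/(k−1))·( (k^{t+2} − k^3)/(k−1) + k^3(k−2)(t−1) ) + kt. -/
open SimpleGraph

/-- The number of geodesics (shortest paths) in `G` between `u` and `v`. -/
noncomputable def numGeodesics {V : Type*} (G : SimpleGraph V) (u v : V) : ℕ :=
  {p : G.Walk u v | p.IsPath ∧ p.length = G.dist u v}.ncard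

lemma numGeodesics_comm {V : Type*} (G : SimpleGraph V) (u v : V) :
    numGeodesics G u v = numGeodesics G v u := by
  have himg : {p : G.Walk v u | p.IsPath ∧ p.length = G.dist v u} =
      (fun p : G.Walk u v => p.reverse) '' {p : G.Walk u v | p.IsPath ∧ p.length = G.dist u v} := by
    ext p
    constructor
    · rintro ⟨hp, hl⟩
      exact ⟨p.reverse, ⟨hp.reverse, by
        rw [SimpleGraph.Walk.length_reverse, hl, SimpleGraph.dist_comm]⟩, p.reverse_reverse⟩
    · rintro ⟨q, ⟨hq, hl⟩, rfl⟩
      exact ⟨hq.reverse, by rw [SimpleGraph.Walk.length_reverse, hl, SimpleGraph.dist_comm]⟩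
  have hinj : Function.Injective (fun p : G.Walk u v => p.reverse) := by
    intro p q h
    simpa using congrArg SimpleGraph.Walk.reverse h
  unfold numGeodesics
  rw [himg, Set.ncard_image_of_injective _ hinj]

/-- The geodesic subpath number of a finite graph: the sum, over unordered pairs of
distinct vertices, of the number of geodesics between them, plus `n` for the `n`
geodesics of length zero. -/
noncomputable def gpn {V : Type*} [Fintype V] [DecidableEq V] (G : SimpleGraph V) : ℕ :=
  (∑ e ∈ Finset.univ.filter (fun e : Sym2 V => ¬ e.IsDiag),
      Sym2.lift ⟨fun u v => numGeodesics G u v, fun u v => numGeodesics_comm G u v⟩ e)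
    + Fintype.card V

/-- The sequential join of `t` copies of the discrete graph `D_k` on `k` vertices:
vertex `(i, a)` lies in the `i`-th copy, and two vertices are adjacent iff they lie
in consecutive copies. -/
def seqJoin (k t : ℕ) : SimpleGraph (Fin t × Fin k) where
  Adj a b := ((a.1 : ℕ) + 1 = (b.1 : ℕ)) ∨ ((b.1 : ℕ) + 1 = (a.1 : ℕ))
  symm := ⟨by intro a b h; exact h.symm⟩
  loopless := ⟨by intro a h; rcases h with h | h <;> omega⟩

instance (k t : ℕ) : DecidableRel (seqJoin k t).Adj := fun a b =>
  inferInstanceAs (Decidable (_ ∨ _))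

variable {k t : ℕ}

lemma layer_bound {u v : Fin t × Fin k} (p : (seqJoin k t).Walk u v) :
    v.1.1 ≤ u.1.1 + p.length ∧ u.1.1 ≤ v.1.1 + p.length := by
  induction p with
  | nil => omega
  | @cons u w v h q ih =>
    simp only [Walk.length_cons]; rcases h with h | h <;> omega

lemma support_layers {u v : Fin t × Fin k} (p : (seqJoin k t).Walk u v) :
    u.1.1 + p.length = v.1.1 →
    p.support.map (fun x => x.1.1) = List.range' u.1.1 (p.length + 1) := by
  induction p with
  | nil => intro h; simp
  | @cons u w v h q ih =>
    intro hl
    have hb := layer_bound q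
    simp only [Walk.length_cons] at hl
    have hw : w.1.1 = u.1.1 + 1 := by rcases h with h | h <;> omega
    have := ih (by omega)
    simp only [Walk.support_cons, List.map_cons, this, Walk.length_cons, hw]
    simp [List.range'_succ]

lemma isPath_of_layers {u v : Fin t × Fin k} (p : (seqJoin k t).Walk u v)
    (hl : u.1.1 + p.length = v.1.1) : p.IsPath := by
  rw [Walk.isPath_def]
  have h1 : (p.support.map (fun x => x.1.1)).Nodup := by
    rw [support_layers p hl]; exact List.nodup_range'
  exact h1.of_map _

lemma exists_walk_up : ∀ (d : ℕ) (i j : Fin t) (a b : Fin k), (j : ℕ) = (i : ℕ) + (d + 1) →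
    ∃ p : (seqJoin k t).Walk (i, a) (j, b), p.length = d + 1 := by
  intro d
  induction d with
  | zero =>
    intro i j a b hij
    exact ⟨Walk.cons (Or.inl hij.symm) Walk.nil, rfl⟩
  | succ d ih =>
    intro i j a b hij
    have hi' : (i : ℕ) + 1 < t := by omega
    obtain ⟨q, hq⟩ := ih ⟨i.1 + 1, hi'⟩ j b b (by simp; omega)
    exact ⟨Walk.cons (Or.inl rfl) q, by show q.length + 1 = _; rw [hq]⟩

lemma dist_cross {i j : Fin t} {a b : Fin k} (hij : (i : ℕ) < (j : ℕ)) :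
    (seqJoin k t).dist (i, a) (j, b) = (j : ℕ) - (i : ℕ) := by
  obtain ⟨p, hp⟩ := exists_walk_up ((j : ℕ) - (i : ℕ) - 1) i j a b (by omega)
  have hub := SimpleGraph.dist_le p
  have hr : (seqJoin k t).Reachable (i, a) (j, b) := ⟨p⟩
  obtain ⟨q, hq⟩ := hr.exists_walk_length_eq_dist
  have hlb := layer_bound q
  simp only at hlb
  omega

lemma dist_same {i : Fin t} {a b : Fin k} (ht : 2 ≤ t) (hab : a ≠ b) :
    (seqJoin k t).dist (i, a) (i, b) = 2 := by
  have hi := i.2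
  set j : Fin t := if h : (i : ℕ) + 1 < t then ⟨i.1 + 1, h⟩ else ⟨i.1 - 1, by omega⟩ with hj
  have hadj1 : (seqJoin k t).Adj (i, a) (j, a) := by
    by_cases h : (i : ℕ) + 1 < t <;> simp [seqJoin, hj, h] <;> omega
  have hadj2 : (seqJoin k t).Adj (j, a) (i, b) := by
    by_cases h : (i : ℕ) + 1 < t <;> simp [seqJoin, hj, h] <;> omega
  have hub := SimpleGraph.dist_le (Walk.cons hadj1 (Walk.cons hadj2 Walk.nil))
  simp only [Walk.length_cons, Walk.length_nil] at hub
  have hne : ((i, a) : Fin t × Fin k) ≠ (i, b) := by simp [hab]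
  have hr : (seqJoin k t).Reachable (i, a) (i, b) := ⟨Walk.cons hadj1 (Walk.cons hadj2 Walk.nil)⟩
  have h0 : (seqJoin k t).dist (i, a) (i, b) ≠ 0 := by
    intro hc; exact hne (hr.dist_eq_zero_iff.mp hc)
  have h1 : (seqJoin k t).dist (i, a) (i, b) ≠ 1 := by
    intro hc
    have := SimpleGraph.dist_eq_one_iff_adj.mp hc
    rcases this with h | h <;> simp at h
  omega

lemma walk_length_one {V : Type*} {G : SimpleGraph V} {u v : V} (p : G.Walk u v)
    (hp : p.length = 1) : ∃ h : G.Adj u v, p = Walk.cons h Walk.nil := by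
  cases p with
  | nil => simp at hp
  | cons h q =>
    cases q with
    | nil => exact ⟨h, rfl⟩
    | cons h' r => simp [Walk.length_cons] at hp

lemma card_walks : ∀ (d : ℕ) (i j : Fin t) (a b : Fin k), (j : ℕ) = (i : ℕ) + (d + 1) →
    Nat.card {p : (seqJoin k t).Walk (i, a) (j, b) // p.length = d + 1} = k ^ d := by
  intro d
  induction d with
  | zero =>
    intro i j a b hij
    have hadj : (seqJoin k t).Adj (i, a) (j, b) := Or.inl hij.symm
    rw [pow_zero, Nat.card_eq_one_iff_unique]
    refine ⟨⟨?_⟩, ⟨⟨Walk.cons hadj Walk.nil, by simp⟩⟩⟩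
    rintro ⟨p, hp⟩ ⟨q, hq⟩
    obtain ⟨h1, rfl⟩ := walk_length_one p hp
    obtain ⟨h2, rfl⟩ := walk_length_one q hq
    rfl
  | succ d ih =>
    intro i j a b hij
    have hi' : (i : ℕ) + 1 < t := by omega
    have hadj : ∀ c : Fin k, (seqJoin k t).Adj (i, a) ((⟨i.1 + 1, hi'⟩ : Fin t), c) :=
      fun c => Or.inl rfl
    let g : (Σ c : Fin k,
          {q : (seqJoin k t).Walk ((⟨i.1 + 1, hi'⟩ : Fin t), c) (j, b) // q.length = d + 1}) →
        {p : (seqJoin k t).Walk (i, a) (j, b) // p.length = d + 1 + 1} :=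
      fun x => ⟨Walk.cons (hadj x.1) x.2.1, by simp [x.2.2]⟩
    have hbij : Function.Bijective g := by
      constructor
      · rintro ⟨c, q, hq⟩ ⟨c', q', hq'⟩ he
        simp only [g, Subtype.mk.injEq] at he
        injection he with e1 e2 e3 e4
        have hc : c = c' := congrArg Prod.snd e2
        subst hc
        have hq2 : q = q' := eq_of_heq e4
        subst hq2
        rfl
      · rintro ⟨p, hp⟩
        cases p with
        | nil => simp at hp
        | @cons _ w _ h q =>
          simp only [Walk.length_cons, Nat.add_right_cancel_iff] at hp
          obtain ⟨w1, c⟩ := w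
          have hb := layer_bound q
          simp only at hb
          have hw : w1.1 = i.1 + 1 := by
            rcases h with h | h <;> simp at h <;> omega
          have hw1 : w1 = ⟨i.1 + 1, hi'⟩ := Fin.ext hw
          subst hw1
          exact ⟨⟨c, q, hp⟩, rfl⟩
    have := Nat.card_eq_of_bijective g hbij
    rw [← this, Nat.card_eq_fintype_card, Fintype.card_sigma]
    have : ∀ c : Fin k,
        Fintype.card {q : (seqJoin k t).Walk ((⟨i.1 + 1, hi'⟩ : Fin t), c) (j, b) // q.length = d + 1}
          = k ^ d := by
      intro c
      rw [← Nat.card_eq_fintype_card]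
      exact ih ⟨i.1 + 1, hi'⟩ j c b (by simp; omega)
    simp [this, pow_succ, mul_comm]

lemma numGeodesics_cross {i j : Fin t} (a b : Fin k) (hij : (i : ℕ) < (j : ℕ)) :
    numGeodesics (seqJoin k t) (i, a) (j, b) = k ^ ((j : ℕ) - (i : ℕ) - 1) := by
  have hd := dist_cross (k := k) (a := a) (b := b) hij
  have hset : {p : (seqJoin k t).Walk (i, a) (j, b) |
      p.IsPath ∧ p.length = (seqJoin k t).dist (i, a) (j, b)}
      = {p : (seqJoin k t).Walk (i, a) (j, b) | p.length = ((j : ℕ) - (i : ℕ) - 1) + 1} := by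
    ext p
    simp only [Set.mem_setOf_eq, hd]
    constructor
    · rintro ⟨-, h⟩; omega
    · intro h; exact ⟨isPath_of_layers p (by simp; omega), by omega⟩
  rw [numGeodesics, hset, ← Nat.card_coe_set_eq]
  exact card_walks ((j : ℕ) - (i : ℕ) - 1) i j a b (by omega)

lemma isPath_of_length_two {V : Type*} {G : SimpleGraph V} {u v : V} (hne : u ≠ v)
    (p : G.Walk u v) (hp : p.length = 2) : p.IsPath := by
  cases p with
  | nil => simp at hp
  | @cons _ w _ h q =>
    cases q with
    | nil => simp at hp
    | @cons _ x _ h' r =>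
      cases r with
      | nil => simp [Walk.isPath_def, h.ne, h'.ne, hne]
      | cons h'' r' => simp [Walk.length_cons] at hp

lemma numGeodesics_same {i : Fin t} {a b : Fin k} (ht2 : 2 ≤ t) (hab : a ≠ b) :
    numGeodesics (seqJoin k t) (i, a) (i, b)
      = k * ((if 0 < (i : ℕ) then 1 else 0) + (if (i : ℕ) + 1 < t then 1 else 0)) := by
  have hd := dist_same (k := k) (i := i) (a := a) (b := b) ht2 hab
  have hne : ((i, a) : Fin t × Fin k) ≠ (i, b) := by simp [hab]
  have hset : {p : (seqJoin k t).Walk (i, a) (i, b) |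
      p.IsPath ∧ p.length = (seqJoin k t).dist (i, a) (i, b)}
      = {p : (seqJoin k t).Walk (i, a) (i, b) | p.length = 2} := by
    ext p
    simp only [Set.mem_setOf_eq, hd]
    constructor
    · rintro ⟨-, h⟩; exact h
    · intro h; exact ⟨isPath_of_length_two hne p h, h⟩
  rw [numGeodesics, hset, ← Nat.card_coe_set_eq]
  have e1 : ↥{p : (seqJoin k t).Walk (i, a) (i, b) | p.length = 2}
      ≃ ((seqJoin k t).commonNeighbors (i, a) (i, b)) :=
    (seqJoin k t).walkLengthTwoEquivCommonNeighbors (i, a) (i, b)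
  rw [Nat.card_congr e1]
  -- common neighbors
  have e2 : (seqJoin k t).commonNeighbors (i, a) (i, b)
      = {j' : Fin t | (i : ℕ) + 1 = (j' : ℕ) ∨ (j' : ℕ) + 1 = (i : ℕ)} ×ˢ (Set.univ : Set (Fin k)) := by
    ext ⟨j', c⟩
    simp only [commonNeighbors, Set.mem_inter_iff, mem_neighborSet, seqJoin, Set.mem_prod,
      Set.mem_setOf_eq, Set.mem_univ, and_true]
    tauto
  rw [e2, Nat.card_congr (Equiv.Set.prod _ _), Nat.card_prod]
  have e3 : Nat.card (Set.univ : Set (Fin k)) = k := by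
    rw [Nat.card_congr (Equiv.Set.univ _)]; simp
  rw [e3]
  have e4 : Nat.card {j' : Fin t | (i : ℕ) + 1 = (j' : ℕ) ∨ (j' : ℕ) + 1 = (i : ℕ)}
      = (if 0 < (i : ℕ) then 1 else 0) + (if (i : ℕ) + 1 < t then 1 else 0) := by
    rw [Nat.card_coe_set_eq]
    have hi := i.2
    by_cases h0 : 0 < (i : ℕ) <;> by_cases h1 : (i : ℕ) + 1 < t
    · have : {j' : Fin t | (i : ℕ) + 1 = (j' : ℕ) ∨ (j' : ℕ) + 1 = (i : ℕ)}
          = {(⟨i.1 + 1, h1⟩ : Fin t), ⟨i.1 - 1, by omega⟩} := by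
        ext j'; simp [Fin.ext_iff]; omega
      rw [this, Set.ncard_pair (by simp [Fin.ext_iff]; omega)]
      simp [h0, h1]
    · have : {j' : Fin t | (i : ℕ) + 1 = (j' : ℕ) ∨ (j' : ℕ) + 1 = (i : ℕ)}
          = {(⟨i.1 - 1, by omega⟩ : Fin t)} := by
        ext j'; simp [Fin.ext_iff]; omega
      rw [this, Set.ncard_singleton]
      simp [h0, h1]
    · have : {j' : Fin t | (i : ℕ) + 1 = (j' : ℕ) ∨ (j' : ℕ) + 1 = (i : ℕ)}
          = {(⟨i.1 + 1, h1⟩ : Fin t)} := by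
        ext j'; simp [Fin.ext_iff]; omega
      rw [this, Set.ncard_singleton]
      simp [h0, h1]
    · omega
  rw [e4, mul_comm]

open Finset

def Wnat (k n : ℕ) : ℕ :=
  ∑ i ∈ range n, ∑ j ∈ range n, if i = j then 0 else k ^ (Nat.dist i j - 1)

lemma Wnat_succ (k n : ℕ) :
    Wnat k (n + 1) = Wnat k n + 2 * ∑ d ∈ range n, k ^ d := by
  unfold Wnat
  rw [Finset.sum_range_succ]
  have hrow : ∑ j ∈ range (n + 1), (if n = j then 0 else k ^ (Nat.dist n j - 1))
      = ∑ j ∈ range n, k ^ (n - 1 - j) := by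
    rw [Finset.sum_range_succ, if_pos rfl, add_zero]
    apply Finset.sum_congr rfl
    intro j hj
    have hj' : j < n := Finset.mem_range.mp hj
    rw [if_neg (by omega), Nat.dist_eq_sub_of_le_right (by omega)]
    congr 1
    omega
  have hcol : ∀ i ∈ range n,
      ∑ j ∈ range (n + 1), (if i = j then 0 else k ^ (Nat.dist i j - 1))
      = (∑ j ∈ range n, (if i = j then 0 else k ^ (Nat.dist i j - 1))) + k ^ (n - 1 - i) := by
    intro i hi
    have hi' : i < n := Finset.mem_range.mp hi
    rw [Finset.sum_range_succ, if_neg (by omega), Nat.dist_eq_sub_of_le (by omega)]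
    congr 2
    omega
  rw [Finset.sum_congr rfl hcol, Finset.sum_add_distrib, hrow]
  have hrefl : ∑ j ∈ range n, k ^ (n - 1 - j) = ∑ j ∈ range n, k ^ j :=
    Finset.sum_range_reflect (fun j => k ^ j) n
  rw [hrefl]
  ring

lemma Wreal {k : ℕ} (hk : 2 ≤ k) (n : ℕ) :
    (Wnat k n : ℝ) * ((k : ℝ) - 1) ^ 2 = 2 * ((k : ℝ) ^ n - 1 - n * ((k : ℝ) - 1)) := by
  have hk1 : (k : ℝ) ≠ 1 := by
    have : (2 : ℝ) ≤ (k : ℝ) := by exact_mod_cast hk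
    linarith
  have hk0 : (k : ℝ) - 1 ≠ 0 := fun h => hk1 (by linarith)
  induction n with
  | zero => simp [Wnat]
  | succ n ih =>
    rw [Wnat_succ]
    push_cast
    rw [geom_sum_eq hk1]
    push_cast at ih
    field_simp
    linear_combination ih

lemma term_eval (ht2 : 2 ≤ t) (i j : Fin t) (a b : Fin k) :
    (if (i, a) ≠ (j, b) then numGeodesics (seqJoin k t) (i, a) (j, b) else 0)
      = if (i : ℕ) = (j : ℕ) then
          (if a = b then 0 else
            k * ((if 0 < (i : ℕ) then 1 else 0) + (if (i : ℕ) + 1 < t then 1 else 0)))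
        else k ^ (Nat.dist (i : ℕ) (j : ℕ) - 1) := by
  by_cases hij : i = j
  · subst hij
    rw [if_pos rfl]
    by_cases hab : a = b
    · subst hab; simp
    · rw [if_neg hab, if_pos (by simp [hab]), numGeodesics_same ht2 hab]
  · have hij' : (i : ℕ) ≠ (j : ℕ) := fun h => hij (Fin.ext h)
    rw [if_neg hij', if_pos (by simp [hij])]
    rcases lt_or_gt_of_ne hij' with h | h
    · rw [numGeodesics_cross a b h, Nat.dist_eq_sub_of_le (le_of_lt h)]
    · rw [numGeodesics_comm, numGeodesics_cross b a h,
        Nat.dist_eq_sub_of_le_right (le_of_lt h)]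

lemma sum_ite_ne (m C : ℕ) (a : Fin m) :
    ∑ b : Fin m, (if a = b then 0 else C) = (m - 1) * C := by
  have h1 : ∀ b : Fin m, (if a = b then 0 else C) = (if ¬ (a = b) then C else 0) := by
    intro b; by_cases h : a = b <;> simp [h]
  simp only [h1]
  rw [Finset.sum_ite]
  simp only [Finset.sum_const, smul_eq_mul, mul_zero, smul_zero, add_zero]
  congr 1
  rw [Finset.filter_not, Finset.card_sdiff_of_subset (Finset.filter_subset _ _)]
  have : Finset.univ.filter (fun b : Fin m => a = b) = {a} := by
    ext b; simp [eq_comm]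
  rw [this]
  simp

lemma sumc0 (ht2 : 2 ≤ t) : ∑ i : Fin t, (if 0 < (i : ℕ) then 1 else 0) = t - 1 := by
  rw [Fin.sum_univ_eq_sum_range (fun i => if 0 < i then 1 else 0) t, ← Finset.sum_filter,
    Finset.sum_const, smul_eq_mul, mul_one]
  have : (range t).filter (fun i => 0 < i) = Finset.Ico 1 t := by
    ext i; simp [Finset.mem_Ico]; omega
  rw [this, Nat.card_Ico]

lemma sumc1 (ht2 : 2 ≤ t) : ∑ i : Fin t, (if (i : ℕ) + 1 < t then 1 else 0) = t - 1 := by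
  rw [Fin.sum_univ_eq_sum_range (fun i => if i + 1 < t then 1 else 0) t, ← Finset.sum_filter,
    Finset.sum_const, smul_eq_mul, mul_one]
  have : (range t).filter (fun i => i + 1 < t) = range (t - 1) := by
    ext i; simp; omega
  rw [this, Finset.card_range]

lemma T_eval (ht2 : 2 ≤ t) :
    ∑ u : Fin t × Fin k, ∑ v : Fin t × Fin k,
        (if u ≠ v then numGeodesics (seqJoin k t) u v else 0)
      = 2 * (k ^ 2 * (k - 1) * (t - 1)) + k ^ 2 * Wnat k t := by
  simp only [Fintype.sum_prod_type]
  have h1 : ∀ (i j : Fin t) (a : Fin k), ∑ b : Fin k,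
      (if ((i, a) : Fin t × Fin k) ≠ (j, b) then numGeodesics (seqJoin k t) (i, a) (j, b) else 0)
      = if (i : ℕ) = (j : ℕ) then
          (k - 1) * (k * ((if 0 < (i : ℕ) then 1 else 0) + (if (i : ℕ) + 1 < t then 1 else 0)))
        else k * k ^ (Nat.dist (i : ℕ) (j : ℕ) - 1) := by
    intro i j a
    simp only [term_eval ht2]
    by_cases hij : (i : ℕ) = (j : ℕ)
    · simp only [if_pos hij]
      exact sum_ite_ne k _ a
    · simp only [if_neg hij, Finset.sum_const, Finset.card_univ, Fintype.card_fin, smul_eq_mul]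
  simp only [h1, Finset.sum_const, Finset.card_univ, Fintype.card_fin, smul_eq_mul]
  have h2 : ∀ i : Fin t, (∑ j : Fin t,
      if (i : ℕ) = (j : ℕ) then
        (k - 1) * (k * ((if 0 < (i : ℕ) then 1 else 0) + if (i : ℕ) + 1 < t then 1 else 0))
      else k * k ^ (Nat.dist (i : ℕ) (j : ℕ) - 1))
      = (k - 1) * (k * ((if 0 < (i : ℕ) then 1 else 0) + if (i : ℕ) + 1 < t then 1 else 0))
        + k * ∑ j : Fin t, (if (i : ℕ) = (j : ℕ) then 0 else k ^ (Nat.dist (i : ℕ) (j : ℕ) - 1)) := by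
    intro i
    have hsplit : ∀ j : Fin t,
        (if (i : ℕ) = (j : ℕ) then
          (k - 1) * (k * ((if 0 < (i : ℕ) then 1 else 0) + if (i : ℕ) + 1 < t then 1 else 0))
        else k * k ^ (Nat.dist (i : ℕ) (j : ℕ) - 1))
        = (if i = j then
            (k - 1) * (k * ((if 0 < (i : ℕ) then 1 else 0) + if (i : ℕ) + 1 < t then 1 else 0))
          else 0)
          + (if (i : ℕ) = (j : ℕ) then 0 else k * k ^ (Nat.dist (i : ℕ) (j : ℕ) - 1)) := by
      intro j
      by_cases h : (i : ℕ) = (j : ℕ)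
      · simp [h, Fin.ext h]
      · rw [if_neg h, if_neg (fun hc => h (congrArg Fin.val hc)), if_neg h, zero_add]
    simp only [hsplit]
    rw [Finset.sum_add_distrib, Finset.sum_ite_eq, if_pos (Finset.mem_univ i), Finset.mul_sum]
    congr 1
    apply Finset.sum_congr rfl
    intro j _
    by_cases h : (i : ℕ) = (j : ℕ) <;> simp [h]
  simp only [h2]
  have h3 : ∑ i : Fin t,
      (∑ j : Fin t, (if (i : ℕ) = (j : ℕ) then 0 else k ^ (Nat.dist (i : ℕ) (j : ℕ) - 1)))
      = Wnat k t := by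
    rw [Fin.sum_univ_eq_sum_range
      (fun i' => ∑ j : Fin t, (if i' = (j : ℕ) then 0 else k ^ (Nat.dist i' (j : ℕ) - 1))) t]
    unfold Wnat
    apply Finset.sum_congr rfl
    intro i _
    exact Fin.sum_univ_eq_sum_range (fun j' => if i = j' then 0 else k ^ (Nat.dist i j' - 1)) t
  have h4 : ∑ i : Fin t,
      ((if 0 < (i : ℕ) then 1 else 0) + if (i : ℕ) + 1 < t then 1 else 0) = 2 * (t - 1) := by
    rw [Finset.sum_add_distrib, sumc0 ht2, sumc1 ht2]
    ring
  simp only [mul_add, Finset.sum_add_distrib]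
  have eA : ∑ i : Fin t, k * ((k - 1) * (k * if 0 < (i : ℕ) then 1 else 0))
      = (k * ((k - 1) * k)) * (t - 1) := by
    have hri : ∀ i : Fin t, k * ((k - 1) * (k * if 0 < (i : ℕ) then 1 else 0))
        = (k * ((k - 1) * k)) * (if 0 < (i : ℕ) then 1 else 0) := fun i => by ring
    simp only [hri]
    rw [← Finset.mul_sum, sumc0 ht2]
  have eB : ∑ i : Fin t, k * ((k - 1) * (k * if (i : ℕ) + 1 < t then 1 else 0))
      = (k * ((k - 1) * k)) * (t - 1) := by
    have hri : ∀ i : Fin t, k * ((k - 1) * (k * if (i : ℕ) + 1 < t then 1 else 0))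
        = (k * ((k - 1) * k)) * (if (i : ℕ) + 1 < t then 1 else 0) := fun i => by ring
    simp only [hri]
    rw [← Finset.mul_sum, sumc1 ht2]
  have e2 : ∑ i : Fin t, k * (k * ∑ j : Fin t,
      (if (i : ℕ) = (j : ℕ) then 0 else k ^ (Nat.dist (i : ℕ) (j : ℕ) - 1)))
      = k ^ 2 * Wnat k t := by
    have hri : ∀ i : Fin t, k * (k * ∑ j : Fin t,
        (if (i : ℕ) = (j : ℕ) then 0 else k ^ (Nat.dist (i : ℕ) (j : ℕ) - 1)))
        = (k * k) * ∑ j : Fin t,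
            (if (i : ℕ) = (j : ℕ) then 0 else k ^ (Nat.dist (i : ℕ) (j : ℕ) - 1)) :=
      fun i => by ring
    simp only [hri]
    rw [← Finset.mul_sum, h3]
    ring
  rw [eA, eB, e2]
  ring

lemma sym2_fiber {V : Type*} [Fintype V] [DecidableEq V] (L : Sym2 V → ℕ) :
    ∑ p ∈ (Finset.univ : Finset V).offDiag, L s(p.1, p.2)
      = ∑ e ∈ Finset.univ.filter (fun e : Sym2 V => ¬ e.IsDiag), 2 * L e := by
  have hmaps : ∀ p ∈ (Finset.univ : Finset V).offDiag,
      s(p.1, p.2) ∈ Finset.univ.filter (fun e : Sym2 V => ¬ e.IsDiag) := by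
    intro p hp
    have := (Finset.mem_offDiag.mp hp).2.2
    simp only [Finset.mem_filter, Finset.mem_univ, true_and, Sym2.isDiag_iff_proj_eq]
    exact this
  rw [← Finset.sum_fiberwise_of_maps_to hmaps (fun p => L s(p.1, p.2))]
  apply Finset.sum_congr rfl
  intro e he
  induction e using Sym2.ind with
  | _ u v =>
    have hne : u ≠ v := by
      simpa [Sym2.isDiag_iff_proj_eq] using (Finset.mem_filter.mp he).2
    have hfib : (Finset.univ.offDiag.filter (fun p : V × V => s(p.1, p.2) = s(u, v)))
        = {(u, v), (v, u)} := by
      ext ⟨x, y⟩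
      simp only [Finset.mem_filter, Finset.mem_offDiag, Finset.mem_univ, true_and,
        Finset.mem_insert, Finset.mem_singleton, Prod.mk.injEq, Sym2.eq_iff]
      constructor
      · rintro ⟨hxy, (⟨rfl, rfl⟩ | ⟨rfl, rfl⟩)⟩ <;> simp
      · rintro (⟨rfl, rfl⟩ | ⟨rfl, rfl⟩) <;> simp [hne, hne.symm]
    rw [hfib, Finset.sum_pair (by simp [Prod.ext_iff]; intro h; exact fun h2 => hne h)]
    have hsw : s(v, u) = s(u, v) := Sym2.eq_swap
    simp only [hsw, two_mul]

/-- exact value of the geodesic subpath number of `G_{k,t}`. -/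
theorem gpn_seqJoin (k t : ℕ) (hk : 2 ≤ k) (ht : 2 ≤ t) :
    (gpn (seqJoin k t) : ℝ) =
      (1 / ((k : ℝ) - 1)) *
          (((k : ℝ) ^ (t + 2) - (k : ℝ) ^ 3) / ((k : ℝ) - 1)
            + (k : ℝ) ^ 3 * ((k : ℝ) - 2) * ((t : ℝ) - 1))
        + (k : ℝ) * (t : ℝ) := by
  classical
  set L : Sym2 (Fin t × Fin k) → ℕ :=
    Sym2.lift ⟨fun u v => numGeodesics (seqJoin k t) u v,
      fun u v => numGeodesics_comm (seqJoin k t) u v⟩ with hL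
  set S : ℕ := ∑ e ∈ Finset.univ.filter (fun e : Sym2 (Fin t × Fin k) => ¬ e.IsDiag), L e with hS
  have hgpn : gpn (seqJoin k t) = S + t * k := by
    unfold gpn
    rw [Fintype.card_prod, Fintype.card_fin, Fintype.card_fin]
  have hlift : ∀ p : (Fin t × Fin k) × (Fin t × Fin k),
      L s(p.1, p.2) = numGeodesics (seqJoin k t) p.1 p.2 := by
    rintro ⟨u, v⟩
    simp [hL]
  have hA := sym2_fiber L
  have hoff : (Finset.univ : Finset (Fin t × Fin k)).offDiag
      = (Finset.univ ×ˢ Finset.univ).filter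
          (fun p : (Fin t × Fin k) × (Fin t × Fin k) => p.1 ≠ p.2) := by
    ext ⟨x, y⟩
    simp [Finset.mem_offDiag]
  have hB : ∑ p ∈ (Finset.univ : Finset (Fin t × Fin k)).offDiag, L s(p.1, p.2)
      = ∑ u : Fin t × Fin k, ∑ v : Fin t × Fin k,
          (if u ≠ v then numGeodesics (seqJoin k t) u v else 0) := by
    simp only [hlift]
    rw [hoff, Finset.sum_filter, Finset.sum_product]
  have h2S : 2 * S = 2 * (k ^ 2 * (k - 1) * (t - 1)) + k ^ 2 * Wnat k t := by
    rw [hS, Finset.mul_sum, ← hA, hB]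
    exact T_eval ht
  have hk1 : (k : ℝ) ≠ 1 := by
    have : (2 : ℝ) ≤ (k : ℝ) := by exact_mod_cast hk
    linarith
  have hk0 : (k : ℝ) - 1 ≠ 0 := fun h => hk1 (by linarith)
  have hw := Wreal hk t
  have hcast : 2 * (S : ℝ) = 2 * ((k : ℝ) ^ 2 * ((k : ℝ) - 1) * ((t : ℝ) - 1))
      + (k : ℝ) ^ 2 * (Wnat k t : ℝ) := by
    have := congrArg (Nat.cast : ℕ → ℝ) h2S
    push_cast [Nat.cast_sub (show 1 ≤ k by omega), Nat.cast_sub (show 1 ≤ t by omega)] at this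
    convert this using 2 <;> push_cast <;> ring
  have hWval : (Wnat k t : ℝ) = 2 * ((k : ℝ) ^ t - 1 - t * ((k : ℝ) - 1)) / ((k : ℝ) - 1) ^ 2 := by
    rw [eq_div_iff (pow_ne_zero 2 hk0)]
    exact hw
  have hSval : (S : ℝ) = (k : ℝ) ^ 2 * ((k : ℝ) - 1) * ((t : ℝ) - 1)
      + (k : ℝ) ^ 2 * (Wnat k t : ℝ) / 2 := by linarith [hcast]
  rw [hgpn]
  push_cast
  rw [hSval, hWval, pow_add]
  field_simp
  ring
end

section
/- Let k, t ≥ 2 be integers and let G_{k,t} be the sequential join of t copies of the discrete graph D_k, with copies denoted D_k^1, …, D_k^t in order. If u ∈ D_k^i and v ∈ D_k^j with i < j and d = j − i, then gpn_{G_{k,t}}(u,v) = k^{d−1}. -/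
open SimpleGraph

namespace SeqJoinAux

open SimpleGraph

instance (k t : ℕ) : DecidableRel (seqJoin k t).Adj :=
  fun a b => inferInstanceAs (Decidable (((a.1 : ℕ) + 1 = (b.1 : ℕ)) ∨ ((b.1 : ℕ) + 1 = (a.1 : ℕ))))

variable {k t : ℕ}

lemma layer_bound {u v : Fin t × Fin k} (p : (seqJoin k t).Walk u v) :
    (v.1 : ℕ) ≤ (u.1 : ℕ) + p.length ∧ (u.1 : ℕ) ≤ (v.1 : ℕ) + p.length := by
  induction p with
  | nil => simp
  | cons h q ih =>
    obtain ⟨ih1, ih2⟩ := ih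
    simp only [SimpleGraph.Walk.length_cons]; rcases h with h | h <;> omega

lemma exists_walk (d : ℕ) :
    ∀ u v : Fin t × Fin k, (v.1 : ℕ) = (u.1 : ℕ) + (d + 1) →
      ∃ p : (seqJoin k t).Walk u v, p.length = d + 1 := by
  induction d with
  | zero =>
    intro u v h
    exact ⟨SimpleGraph.Walk.cons (Or.inl h.symm) SimpleGraph.Walk.nil, rfl⟩
  | succ d ih =>
    intro u v h
    have hlt : (u.1 : ℕ) + 1 < t := by have := v.1.isLt; omega
    obtain ⟨q, hq⟩ := ih (⟨⟨(u.1 : ℕ) + 1, hlt⟩, v.2⟩ : Fin t × Fin k) v (by simp; omega)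
    exact ⟨SimpleGraph.Walk.cons (show (seqJoin k t).Adj _ _ from Or.inl rfl) q, by simp [hq]⟩

lemma dist_eq {u v : Fin t × Fin k} (d : ℕ) (h : (v.1 : ℕ) = (u.1 : ℕ) + (d + 1)) :
    (seqJoin k t).dist u v = d + 1 := by
  obtain ⟨p, hp⟩ := exists_walk d u v h
  have hle : (seqJoin k t).dist u v ≤ d + 1 := hp ▸ SimpleGraph.dist_le p
  have hr : (seqJoin k t).Reachable u v := ⟨p⟩
  obtain ⟨q, hq⟩ := hr.exists_walk_length_eq_dist
  have := (layer_bound q).1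
  omega

lemma isPath_of_length_eq (d : ℕ) :
    ∀ u v : Fin t × Fin k, (v.1 : ℕ) = (u.1 : ℕ) + d →
      ∀ p : (seqJoin k t).Walk u v, p.length = d → p.IsPath := by
  induction d with
  | zero =>
    intro u v h p hp
    have := SimpleGraph.Walk.eq_of_length_eq_zero hp
    subst this
    rw [SimpleGraph.Walk.length_eq_zero_iff, SimpleGraph.Walk.nil_iff_eq_nil] at hp
    subst hp
    exact SimpleGraph.Walk.IsPath.nil
  | succ d ih =>
    intro u v h p hp
    cases p with
    | nil => simp at hp
    | cons hadj q =>
      rename_i x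
      have hq : q.length = d := by simpa using hp
      have hx : (x.1 : ℕ) = (u.1 : ℕ) + 1 := by
        rcases hadj with h' | h'
        · omega
        · exfalso; have := (layer_bound q).1; omega
      refine (ih x v (by omega) q hq).cons ?_
      intro hu
      obtain ⟨q1, q2, rfl⟩ := SimpleGraph.Walk.mem_support_iff_exists_append.mp hu
      have h1 := (layer_bound q1).1
      have h2 := (layer_bound q2).1
      have hlen : q1.length + q2.length = d := by
        simpa [SimpleGraph.Walk.length_append] using hq
      omega

lemma card_zero_of_far (n : ℕ) (u v : Fin t × Fin k) (h : (u.1 : ℕ) + n < (v.1 : ℕ)) :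
    ((seqJoin k t).finsetWalkLength n u v).card = 0 := by
  rw [Finset.card_eq_zero, Finset.eq_empty_iff_forall_notMem]
  intro p hp
  rw [SimpleGraph.mem_finsetWalkLength_iff] at hp
  have := (layer_bound p).1
  omega

lemma card_walkLength (d : ℕ) :
    ∀ u v : Fin t × Fin k, (v.1 : ℕ) = (u.1 : ℕ) + (d + 1) →
      ((seqJoin k t).finsetWalkLength (d + 1) u v).card = k ^ d := by
  induction d with
  | zero =>
    intro u v h
    have hadj : (seqJoin k t).Adj u v := Or.inl h.symm
    have hset : (seqJoin k t).finsetWalkLength 1 u v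
        = {SimpleGraph.Walk.cons hadj SimpleGraph.Walk.nil} := by
      ext p
      rw [SimpleGraph.mem_finsetWalkLength_iff, Finset.mem_singleton]
      constructor
      · intro hp
        cases p with
        | nil => simp at hp
        | cons h' q =>
          cases q with
          | nil => rfl
          | cons h'' r => simp at hp
      · rintro rfl; rfl
    rw [hset]; simp
  | succ d ih =>
    intro u v h
    have hlt : (u.1 : ℕ) + 1 < t := by have := v.1.isLt; omega
    rw [SimpleGraph.finsetWalkLength]
    rw [Finset.card_biUnion ?hdisj]
    case hdisj =>
      intro w _ w' _ hne
      refine Finset.disjoint_left.mpr ?_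
      rintro p hp hp'
      obtain ⟨q, hq, rfl⟩ := Finset.mem_map.mp hp
      obtain ⟨q', hq', heq⟩ := Finset.mem_map.mp hp'
      apply hne
      have := congrArg (fun r => SimpleGraph.Walk.getVert r 1) heq
      replace this : q'.getVert 0 = q.getVert 0 := this
      rw [SimpleGraph.Walk.getVert_zero, SimpleGraph.Walk.getVert_zero] at this
      exact Subtype.ext this.symm
    simp only [Finset.card_map]
    have key : ∀ w : (seqJoin k t).neighborSet u,
        ((seqJoin k t).finsetWalkLength (d + 1) (w : Fin t × Fin k) v).card
          = if ((w : Fin t × Fin k).1 : ℕ) = (u.1 : ℕ) + 1 then k ^ d else 0 := by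
      intro w
      rcases w.2 with h' | h'
      · rw [if_pos h'.symm]
        exact ih _ v (by omega)
      · rw [if_neg (by omega)]
        exact card_zero_of_far _ _ _ (by omega)
    rw [Finset.sum_congr rfl (fun w _ => key w), ← Finset.sum_filter, Finset.sum_const]
    have hcard : (Finset.univ.filter (fun w : (seqJoin k t).neighborSet u =>
        ((w : Fin t × Fin k).1 : ℕ) = (u.1 : ℕ) + 1)).card = (Finset.univ : Finset (Fin k)).card := by
      refine Finset.card_bij' (fun w _ => (w : Fin t × Fin k).2)
        (fun c _ => (⟨(⟨⟨(u.1 : ℕ) + 1, hlt⟩, c⟩ : Fin t × Fin k), Or.inl rfl⟩ :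
          (seqJoin k t).neighborSet u)) ?_ ?_ ?_ ?_
      · intro w _; exact Finset.mem_univ _
      · intro c _
        rw [Finset.mem_filter]
        exact ⟨Finset.mem_univ _, rfl⟩
      · intro w hw
        rw [Finset.mem_filter] at hw
        apply Subtype.ext
        apply Prod.ext
        · exact Fin.ext hw.2.symm
        · rfl
      · intro c _; rfl
    rw [hcard]
    simp [pow_succ, Nat.mul_comm]

end SeqJoinAux

/-- in `G_{k,t}`, if `u` lies in copy `i` and `v` in copy `j` with `i < j`
and `d = j - i`, then the number of `(u,v)`-geodesics is `k^(d-1)`. -/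
theorem numGeodesics_seqJoin (k t : ℕ) (hk : 2 ≤ k) (ht : 2 ≤ t)
    (u v : Fin t × Fin k) (hij : u.1 < v.1) :
    numGeodesics (seqJoin k t) u v = k ^ (((v.1 : ℕ) - (u.1 : ℕ)) - 1) := by
  classical
  have hij' : (u.1 : ℕ) < (v.1 : ℕ) := hij
  set d : ℕ := ((v.1 : ℕ) - (u.1 : ℕ)) - 1 with hdd
  have hd : (v.1 : ℕ) = (u.1 : ℕ) + (d + 1) := by omega
  have hdist := SeqJoinAux.dist_eq d hd
  have hset : {p : (seqJoin k t).Walk u v | p.IsPath ∧ p.length = (seqJoin k t).dist u v}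
      = ↑((seqJoin k t).finsetWalkLength (d + 1) u v) := by
    rw [SimpleGraph.coe_finsetWalkLength_eq, hdist]
    ext p
    constructor
    · rintro ⟨_, h2⟩; exact h2
    · intro h2; exact ⟨SeqJoinAux.isPath_of_length_eq (d + 1) u v hd p h2, h2⟩
  unfold numGeodesics
  rw [hset, Set.ncard_coe_finset, SeqJoinAux.card_walkLength d u v hd]
end

section
/- For the r-dimensional hypercube Q_r, gpn(Q_r) = 2^{r−1} · r! · Σ_{j=0}^{r−1} 1/j! + 2^r. -/
open SimpleGraph

/-- The `r`-dimensional hypercube graph: vertices are binary strings of length `r`,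
adjacent iff they differ in exactly one coordinate. -/
def cubeGraph (r : ℕ) : SimpleGraph (Fin r → Bool) where
  Adj u v := hammingDist u v = 1
  symm := ⟨by intro u v h; rwa [hammingDist_comm]⟩
  loopless := ⟨by intro u h; simp [hammingDist_self] at h⟩


namespace CubeAux

variable {r : ℕ}

def flip (u : Fin r → Bool) (i : Fin r) : Fin r → Bool := Function.update u i (!(u i))

lemma flip_apply (u : Fin r → Bool) (i j : Fin r) :
    flip u i j = if j = i then !(u i) else u j := by
  simp [flip, Function.update_apply]

lemma hd_eq (x y : Fin r → Bool) :
    hammingDist x y = (Finset.univ.filter fun i => x i ≠ y i).card := rfl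

lemma flip_inj (u : Fin r → Bool) {i j : Fin r} (h : flip u i = flip u j) : i = j := by
  by_contra hij
  have h1 := congrFun h i
  rw [flip_apply, flip_apply, if_pos rfl, if_neg hij] at h1
  exact Bool.not_ne_self (u i) h1

lemma filter_flip_self (u : Fin r → Bool) (i : Fin r) :
    (Finset.univ.filter fun j => u j ≠ flip u i j) = {i} := by
  ext j
  simp only [Finset.mem_filter, Finset.mem_univ, true_and, Finset.mem_singleton, flip_apply]
  by_cases hj : j = i
  · subst hj; simp
  · simp [hj]

lemma adj_flip (u : Fin r → Bool) (i : Fin r) : (cubeGraph r).Adj u (flip u i) := by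
  show hammingDist u (flip u i) = 1
  rw [hd_eq, filter_flip_self]
  simp

lemma eq_flip_of_adj {u w : Fin r → Bool} (h : (cubeGraph r).Adj u w) :
    ∃ i, w = flip u i := by
  have h' : (Finset.univ.filter fun j => u j ≠ w j).card = 1 := h
  obtain ⟨i, hi⟩ := Finset.card_eq_one.mp h'
  refine ⟨i, funext fun j => ?_⟩
  rw [flip_apply]
  by_cases hj : j = i
  · subst hj
    have : j ∈ Finset.univ.filter fun j => u j ≠ w j := hi ▸ Finset.mem_singleton_self j
    simp only [Finset.mem_filter, Finset.mem_univ, true_and] at this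
    cases hu : u j <;> cases hw : w j <;> simp_all
  · have : j ∉ Finset.univ.filter fun j' => u j' ≠ w j' := by
      rw [hi]; simpa using hj
    simp only [Finset.mem_filter, Finset.mem_univ, true_and, not_not] at this
    simp [hj, this]

lemma hd_flip_of_ne {u v : Fin r → Bool} {i : Fin r} (h : u i ≠ v i) :
    hammingDist (flip u i) v + 1 = hammingDist u v := by
  rw [hd_eq, hd_eq]
  have hset : (Finset.univ.filter fun j => flip u i j ≠ v j)
      = (Finset.univ.filter fun j => u j ≠ v j).erase i := by
    ext j
    simp only [Finset.mem_filter, Finset.mem_univ, true_and, Finset.mem_erase, flip_apply]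
    by_cases hj : j = i
    · subst hj
      simp only [if_pos rfl]
      cases hu : u j <;> cases hv : v j <;> simp_all
    · simp [hj]
  rw [hset, Finset.card_erase_add_one (by simp [h])]

lemma hd_flip_of_eq {u v : Fin r → Bool} {i : Fin r} (h : u i = v i) :
    hammingDist (flip u i) v = hammingDist u v + 1 := by
  rw [hd_eq, hd_eq]
  have hset : (Finset.univ.filter fun j => flip u i j ≠ v j)
      = insert i ((Finset.univ.filter fun j => u j ≠ v j)) := by
    ext j
    simp only [Finset.mem_filter, Finset.mem_univ, true_and, Finset.mem_insert, flip_apply]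
    by_cases hj : j = i
    · subst hj
      simp only [if_pos rfl]
      cases hu : u j <;> cases hv : v j <;> simp_all
    · simp [hj]
  rw [hset, Finset.card_insert_of_notMem (by simp [h])]

lemma hd_le_walk {u v : Fin r → Bool} (p : (cubeGraph r).Walk u v) :
    hammingDist u v ≤ p.length := by
  induction p with
  | nil => simp [hammingDist_self]
  | @cons a b c h q ih =>
    have h1 : hammingDist a b = 1 := h
    calc hammingDist a c ≤ hammingDist a b + hammingDist b c := hammingDist_triangle _ _ _
      _ ≤ 1 + q.length := by rw [h1]; omega
      _ = (SimpleGraph.Walk.cons h q).length := by rw [SimpleGraph.Walk.length_cons]; omega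

lemma exists_walk (n : ℕ) : ∀ u v : Fin r → Bool, hammingDist u v = n →
    ∃ p : (cubeGraph r).Walk u v, p.length = n := by
  induction n with
  | zero =>
    intro u v h
    obtain rfl := eq_of_hammingDist_eq_zero h
    exact ⟨SimpleGraph.Walk.nil, rfl⟩
  | succ n ih =>
    intro u v h
    have hne : u ≠ v := by
      intro e; subst e; simp [hammingDist_self] at h
    obtain ⟨i, hi⟩ : ∃ i, u i ≠ v i := by
      by_contra hc; push_neg at hc; exact hne (funext hc)
    have h' : hammingDist (flip u i) v = n := by
      have := hd_flip_of_ne hi; omega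
    obtain ⟨p, hp⟩ := ih (flip u i) v h'
    exact ⟨SimpleGraph.Walk.cons (adj_flip u i) p, by simp [hp]⟩

lemma dist_eq (u v : Fin r → Bool) : (cubeGraph r).dist u v = hammingDist u v := by
  obtain ⟨p, hp⟩ := exists_walk (hammingDist u v) u v rfl
  refine le_antisymm (hp ▸ SimpleGraph.dist_le p) ?_
  obtain ⟨q, hq⟩ := SimpleGraph.Reachable.exists_walk_length_eq_dist (⟨p⟩ : (cubeGraph r).Reachable u v)
  exact hq ▸ hd_le_walk q

end CubeAux

namespace CubeAux

variable {r : ℕ}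

instance : DecidableRel (cubeGraph r).Adj := fun u v =>
  inferInstanceAs (Decidable (hammingDist u v = 1))

lemma card_walks (d : ℕ) : ∀ (u v : Fin r → Bool), hammingDist u v = d →
    Nat.card {p : (cubeGraph r).Walk u v // p.length = d} = d.factorial := by
  induction d with
  | zero =>
    intro u v h
    obtain rfl := eq_of_hammingDist_eq_zero h
    rw [Nat.factorial_zero, Nat.card_eq_one_iff_unique]
    constructor
    · constructor
      intro p q
      apply Subtype.ext
      rw [(SimpleGraph.Walk.length_eq_zero_iff.mp p.2).eq_nil,
        (SimpleGraph.Walk.length_eq_zero_iff.mp q.2).eq_nil]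
    · exact ⟨⟨SimpleGraph.Walk.nil, rfl⟩⟩
  | succ d ih =>
    intro u v h
    set f : (Σ i : Fin r, {q : (cubeGraph r).Walk (flip u i) v // q.length = d})
        → {p : (cubeGraph r).Walk u v // p.length = d + 1} :=
      fun x => ⟨SimpleGraph.Walk.cons (adj_flip u x.1) x.2.1, by
        rw [SimpleGraph.Walk.length_cons, x.2.2]⟩ with hf
    have hbij : Function.Bijective f := by
      constructor
      · rintro ⟨i, q, hq⟩ ⟨i', q', hq'⟩ he
        have he' : (SimpleGraph.Walk.cons (adj_flip u i) q : (cubeGraph r).Walk u v)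
            = SimpleGraph.Walk.cons (adj_flip u i') q' := congrArg Subtype.val he
        have hmid : flip u i = flip u i' := by
          have := congrArg (fun p : (cubeGraph r).Walk u v => p.getVert 1) he'
          simpa [SimpleGraph.Walk.getVert_cons_succ, SimpleGraph.Walk.getVert_zero] using this
        obtain rfl : i = i' := flip_inj u hmid
        obtain rfl : q = q' := by simpa using he'
        rfl
      · rintro ⟨p, hp⟩
        cases p with
        | nil => simp at hp
        | @cons _ w _ a q =>
          obtain ⟨i, rfl⟩ := eq_flip_of_adj a
          exact ⟨⟨i, q, by simpa using hp⟩, rfl⟩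
    have hcard := Nat.card_eq_of_bijective f hbij
    rw [← hcard, Nat.card_eq_fintype_card, Fintype.card_sigma]
    have hterm : ∀ i : Fin r,
        Fintype.card {q : (cubeGraph r).Walk (flip u i) v // q.length = d}
          = if u i = v i then 0 else d.factorial := by
      intro i
      by_cases hi : u i = v i
      · rw [if_pos hi, Fintype.card_eq_zero_iff]
        refine ⟨fun q => ?_⟩
        have h1 := hd_le_walk q.1
        have h2 := hd_flip_of_eq (i := i) hi
        omega
      · rw [if_neg hi, ← Nat.card_eq_fintype_card]
        apply ih
        have := hd_flip_of_ne (i := i) hi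
        omega
    rw [Finset.sum_congr rfl (fun i _ => hterm i), Finset.sum_ite,
      Finset.sum_const_zero, Finset.sum_const, zero_add, smul_eq_mul]
    have hcard2 : (Finset.univ.filter fun i => ¬ u i = v i).card = d + 1 := by
      rw [← h, hd_eq]
    rw [hcard2, Nat.factorial_succ]

lemma numGeo (u v : Fin r → Bool) :
    numGeodesics (cubeGraph r) u v = (hammingDist u v).factorial := by
  have hset : {p : (cubeGraph r).Walk u v | p.IsPath ∧ p.length = (cubeGraph r).dist u v}
      = {p : (cubeGraph r).Walk u v | p.length = hammingDist u v} := by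
    ext p
    simp only [Set.mem_setOf_eq, dist_eq]
    exact ⟨fun hh => hh.2, fun hh =>
      ⟨p.isPath_of_length_eq_dist (by rw [dist_eq]; exact hh), hh⟩⟩
  rw [numGeodesics, hset, ← Nat.card_coe_set_eq]
  exact card_walks (hammingDist u v) u v rfl

end CubeAux

namespace CubeAux

variable {r : ℕ}

lemma card_at_dist (u : Fin r → Bool) (d : ℕ) :
    (Finset.univ.filter fun v : Fin r → Bool => hammingDist u v = d).card = r.choose d := by
  have : r.choose d = ((Finset.univ : Finset (Fin r)).powersetCard d).card := by
    rw [Finset.card_powersetCard, Finset.card_univ, Fintype.card_fin]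
  rw [this]
  apply Finset.card_bij' (i := fun v _ => Finset.univ.filter fun j => u j ≠ v j)
    (j := fun S _ => fun j => if j ∈ S then !(u j) else u j)
  · intro v hv
    rw [Finset.mem_powersetCard_univ, ← hd_eq]
    exact (Finset.mem_filter.mp hv).2
  · intro S hS
    rw [Finset.mem_powersetCard_univ] at hS
    simp only [Finset.mem_filter, Finset.mem_univ, true_and]
    rw [hd_eq, ← hS]
    congr 1
    ext j
    simp only [Finset.mem_filter, Finset.mem_univ, true_and]
    by_cases hj : j ∈ S <;> simp [hj]
  · intro v hv
    funext j
    by_cases hj : j ∈ Finset.univ.filter fun j => u j ≠ v j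
    · simp only [Finset.mem_filter, Finset.mem_univ, true_and] at hj
      simp only [Finset.mem_filter, Finset.mem_univ, true_and, if_pos hj]
      cases hu : u j <;> cases hv' : v j <;> simp_all
    · simp only [Finset.mem_filter, Finset.mem_univ, true_and, not_not] at hj
      simp [hj]
  · intro S hS
    ext j
    simp only [Finset.mem_filter, Finset.mem_univ, true_and]
    by_cases hj : j ∈ S
    · simp [hj]
    · simp [hj]

lemma sum_choose_factorial :
    ∑ d ∈ Finset.range (r+1), r.choose d * d.factorial
      = (∑ j ∈ Finset.range r, r.factorial / j.factorial) + 1 := by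
  have h1 : ∀ d ∈ Finset.range (r+1),
      r.choose d * d.factorial = r.factorial / (r-d).factorial := by
    intro d hd
    have hd' : d ≤ r := Nat.lt_succ_iff.mp (Finset.mem_range.mp hd)
    have hkey := Nat.choose_mul_factorial_mul_factorial hd'
    exact (Nat.div_eq_of_eq_mul_left (Nat.factorial_pos _) hkey.symm).symm
  rw [Finset.sum_congr rfl h1]
  have h2 : ∀ d ∈ Finset.range (r+1),
      r.factorial / (r-d).factorial
        = (fun j => r.factorial / j.factorial) ((r + 1) - 1 - d) := by
    intro d _; simp
  rw [Finset.sum_congr rfl h2, Finset.sum_range_reflect (fun j => r.factorial / j.factorial) (r+1),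
    Finset.sum_range_succ, Nat.div_self (Nat.factorial_pos r)]

lemma sum_over_all (u : Fin r → Bool) :
    ∑ v : Fin r → Bool, (hammingDist u v).factorial
      = (∑ j ∈ Finset.range r, r.factorial / j.factorial) + 1 := by
  rw [← sum_choose_factorial (r := r)]
  rw [← Finset.sum_fiberwise_of_maps_to
    (g := fun v : Fin r → Bool => hammingDist u v)
    (t := Finset.range (r+1))
    (fun v _ => Finset.mem_range.mpr (Nat.lt_succ_of_le
      (le_trans hammingDist_le_card_fintype (le_of_eq (Fintype.card_fin r)))))
    (fun v => (hammingDist u v).factorial)]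
  refine Finset.sum_congr rfl fun d _ => ?_
  rw [Finset.sum_congr rfl (fun v hv => by
      rw [(Finset.mem_filter.mp hv).2]),
    Finset.sum_const, card_at_dist, smul_eq_mul]

end CubeAux

namespace CubeAux

variable {r : ℕ}

lemma sum_sym2 :
    2 * (∑ e ∈ Finset.univ.filter (fun e : Sym2 (Fin r → Bool) => ¬ e.IsDiag),
        Sym2.lift ⟨fun u v => numGeodesics (cubeGraph r) u v,
          fun u v => numGeodesics_comm (cubeGraph r) u v⟩ e)
      = 2 ^ r * (∑ j ∈ Finset.range r, r.factorial / j.factorial) := by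
  classical
  set F : Sym2 (Fin r → Bool) → ℕ :=
    Sym2.lift ⟨fun u v => numGeodesics (cubeGraph r) u v,
      fun u v => numGeodesics_comm (cubeGraph r) u v⟩ with hFdef
  have hF : ∀ a b, F s(a, b) = (hammingDist a b).factorial := by
    intro a b
    rw [hFdef, Sym2.lift_mk]
    exact numGeo a b
  set s : Finset ((Fin r → Bool) × (Fin r → Bool)) :=
    Finset.univ.filter (fun p => p.1 ≠ p.2) with hsdef
  set t : Finset (Sym2 (Fin r → Bool)) :=
    Finset.univ.filter (fun e : Sym2 (Fin r → Bool) => ¬ e.IsDiag) with htdef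
  have hmaps : ∀ p ∈ s, Sym2.mk p.1 p.2 ∈ t := by
    intro p hp
    rw [htdef, Finset.mem_filter]
    rw [hsdef, Finset.mem_filter] at hp
    exact ⟨Finset.mem_univ _, by rw [Sym2.isDiag_iff_proj_eq]; exact hp.2⟩
  have hfiber : ∀ e ∈ t,
      (s.filter fun p => Sym2.mk p.1 p.2 = e).card = 2 := by
    intro e he
    induction e with
    | _ a b =>
      rw [htdef, Finset.mem_filter, Sym2.mk_isDiag_iff] at he
      have hab : a ≠ b := he.2
      have : (s.filter fun p => Sym2.mk p.1 p.2 = s(a, b))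
          = {(a, b), (b, a)} := by
        ext ⟨x, y⟩
        rw [Finset.mem_filter, hsdef, Finset.mem_filter]
        simp only [Finset.mem_univ, true_and, Finset.mem_insert, Finset.mem_singleton,
          Sym2.eq_iff, Prod.mk.injEq]
        constructor
        · rintro ⟨-, (⟨rfl, rfl⟩ | ⟨rfl, rfl⟩)⟩
          · exact Or.inl ⟨rfl, rfl⟩
          · exact Or.inr ⟨rfl, rfl⟩
        · rintro (⟨rfl, rfl⟩ | ⟨rfl, rfl⟩)
          · exact ⟨hab, Or.inl ⟨rfl, rfl⟩⟩
          · exact ⟨hab.symm, Or.inr ⟨rfl, rfl⟩⟩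
      rw [this, Finset.card_insert_of_notMem (by simp [hab]), Finset.card_singleton]
  have hmain := Finset.sum_fiberwise_of_maps_to hmaps (fun p => F (Sym2.mk p.1 p.2))
  have hleft : ∑ e ∈ t, ∑ p ∈ s.filter (fun p => Sym2.mk p.1 p.2 = e), F (Sym2.mk p.1 p.2)
      = ∑ e ∈ t, 2 * F e := by
    refine Finset.sum_congr rfl fun e he => ?_
    rw [Finset.sum_congr rfl (fun p hp => by
        rw [(Finset.mem_filter.mp hp).2]),
      Finset.sum_const, hfiber e he, smul_eq_mul]
  have hright : ∑ p ∈ s, F (Sym2.mk p.1 p.2)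
      = 2 ^ r * (∑ j ∈ Finset.range r, r.factorial / j.factorial) := by
    rw [hsdef, Finset.sum_filter, Fintype.sum_prod_type]
    have hinner : ∀ a : Fin r → Bool,
        (∑ b : Fin r → Bool, if a ≠ b then F (s(a, b)) else 0)
          = ∑ j ∈ Finset.range r, r.factorial / j.factorial := by
      intro a
      rw [← Finset.sum_filter, Finset.filter_ne]
      have htot := sum_over_all a
      have hsum : ∀ b, F (s(a, b)) = (hammingDist a b).factorial := fun b => hF a b
      rw [Finset.sum_congr rfl (fun b _ => hsum b)]
      have hsplit := Finset.add_sum_erase Finset.univ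
        (fun b => (hammingDist a b).factorial) (Finset.mem_univ a)
      rw [htot] at hsplit
      simp only [hammingDist_self, Nat.factorial_zero] at hsplit
      omega
    rw [Finset.sum_congr rfl (fun a _ => hinner a), Finset.sum_const, Finset.card_univ,
      Fintype.card_fun, Fintype.card_bool, Fintype.card_fin, smul_eq_mul]
  calc 2 * ∑ e ∈ t, F e = ∑ e ∈ t, 2 * F e := by rw [Finset.mul_sum]
    _ = ∑ p ∈ s, F (Sym2.mk p.1 p.2) := by rw [← hleft]; exact hmain
    _ = 2 ^ r * (∑ j ∈ Finset.range r, r.factorial / j.factorial) := hright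

end CubeAux

/-- `gpn(Q_r) = 2^(r-1) · r! · Σ_{j=0}^{r-1} 1/j! + 2^r`. -/
theorem gpn_cubeGraph (r : ℕ) :
    (gpn (cubeGraph r) : ℝ) =
      2 ^ (r - 1) * (Nat.factorial r : ℝ) *
          (∑ j ∈ Finset.range r, (1 : ℝ) / (Nat.factorial j : ℝ))
        + 2 ^ r := by
  have h2S := CubeAux.sum_sym2 (r := r)
  set S := ∑ e ∈ Finset.univ.filter (fun e : Sym2 (Fin r → Bool) => ¬ e.IsDiag),
      Sym2.lift ⟨fun u v => numGeodesics (cubeGraph r) u v,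
        fun u v => numGeodesics_comm (cubeGraph r) u v⟩ e with hSdef
  set N := ∑ j ∈ Finset.range r, r.factorial / j.factorial with hNdef
  have hS : S = 2 ^ (r - 1) * N := by
    cases r with
    | zero =>
      have : N = 0 := by simp [hNdef]
      rw [this] at h2S ⊢
      omega
    | succ k =>
      have h2 : 2 ^ (k + 1) = 2 * 2 ^ k := by ring
      rw [h2] at h2S
      have : 2 * S = 2 * (2 ^ k * N) := by rw [h2S]; ring
      have hcanc := Nat.eq_of_mul_eq_mul_left (by norm_num) this
      simpa using hcanc
  have hgpn : gpn (cubeGraph r) = S + 2 ^ r := by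
    rw [gpn, ← hSdef]
    congr 1
    rw [Fintype.card_fun, Fintype.card_bool, Fintype.card_fin]
  have hN : (N : ℝ) = (r.factorial : ℝ) * ∑ j ∈ Finset.range r, (1 : ℝ) / (Nat.factorial j : ℝ) := by
    rw [hNdef, Nat.cast_sum, Finset.mul_sum]
    refine Finset.sum_congr rfl fun j hj => ?_
    have hj' : j ≤ r := le_of_lt (Finset.mem_range.mp hj)
    rw [Nat.cast_div (Nat.factorial_dvd_factorial hj')
      (by exact_mod_cast (Nat.factorial_pos j).ne'), mul_one_div]
  rw [hgpn]
  push_cast [hS]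
  rw [hN]
  ring
end

section
/- Let G be a cactus graph on n vertices with k cycles. Then gpn(G) ≥ binom(n+1, 2), with equality if and only if every cycle of G has odd length. -/
open SimpleGraph

/-- The cycles of `G`, recorded as their edge sets. -/
def cycleEdgeSets {V : Type*} (G : SimpleGraph V) : Set (Set (Sym2 V)) :=
  {s | ∃ (u : V) (c : G.Walk u u), c.IsCycle ∧ s = {e | e ∈ c.edges}}

/-- A cactus graph: a connected graph in which all cycles are pairwise edge-disjoint. -/
def IsCactus {V : Type*} (G : SimpleGraph V) : Prop :=
  G.Connected ∧ (cycleEdgeSets G).Pairwise Disjoint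

namespace CactusAux

open SimpleGraph.Walk

variable {V : Type*} {G : SimpleGraph V}

/-- Take the first `n` edges of a walk. -/
def takeW {u v : V} : (p : G.Walk u v) → (n : ℕ) → G.Walk u (p.getVert n)
  | .nil, _ => .nil
  | .cons _ _, 0 => .nil
  | .cons h q, n+1 => .cons h (takeW q n)

/-- Drop the first `n` edges of a walk. -/
def dropW {u v : V} : (p : G.Walk u v) → (n : ℕ) → G.Walk (p.getVert n) v
  | .nil, _ => .nil
  | .cons h q, 0 => .cons h q
  | .cons _ q, n+1 => dropW q n

lemma takeW_append_dropW {u v : V} (p : G.Walk u v) (n : ℕ) :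
    (takeW p n).append (dropW p n) = p := by
  induction p generalizing n with
  | nil => cases n <;> rfl
  | cons h q ih =>
    cases n with
    | zero => rfl
    | succ n => simp only [takeW, dropW]; exact congrArg (Walk.cons h) (ih n)

lemma length_takeW {u v : V} (p : G.Walk u v) (n : ℕ) (hn : n ≤ p.length) :
    (takeW p n).length = n := by
  induction p generalizing n with
  | nil =>
    simp only [Walk.length_nil, Nat.le_zero] at hn
    subst hn; rfl
  | cons h q ih =>
    cases n with
    | zero => rfl
    | succ n =>
      have := ih n (by simpa using hn)
      simp [takeW, this]

lemma end_mem_support_tail {u v : V} (p : G.Walk u v) (hp : p.length ≠ 0) :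
    v ∈ p.support.tail := by
  cases p with
  | nil => simp at hp
  | cons h q => simpa using q.end_mem_support


lemma length_eq_one_of_mem_edges {u t : V} {p : G.Walk u t} (hp : p.IsPath)
    (he : s(u, t) ∈ p.edges) : p.length = 1 := by
  cases p with
  | nil => simp at he
  | @cons _ a _ h q =>
    rw [Walk.edges_cons, List.mem_cons] at he
    rw [Walk.cons_isPath_iff] at hp
    rcases he with he | he
    · rw [Sym2.eq_iff] at he
      rcases he with ⟨-, rfl⟩ | ⟨rfl, rfl⟩
      · -- q : G.Walk t t is a path, hence nil
        have : q = Walk.nil := by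
          have := SimpleGraph.Path.loop_eq ⟨q, hp.1⟩
          exact congrArg Subtype.val this
        subst this; rfl
      · exact absurd h (G.loopless.irrefl _)
    · exact absurd (Walk.fst_mem_support_of_mem_edges q he) hp.2

lemma isCycle_append_reverse {u t : V} {s1 s2 : G.Walk u t}
    (h1 : s1.IsPath) (h2 : s2.IsPath) (hne : u ≠ t)
    (hmeet : ∀ x, x ∈ s1.support → x ∈ s2.support → x = u ∨ x = t)
    (hlen : ¬(s1.length = 1 ∧ s2.length = 1)) :
    (s1.append s2.reverse).IsCycle := by
  have hedisj : ∀ e ∈ s1.edges, e ∉ s2.edges := by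
    intro e he1 he2
    induction e with
    | h x y =>
      have hadj : G.Adj x y := s1.adj_of_mem_edges he1
      have hx1 := Walk.fst_mem_support_of_mem_edges s1 he1
      have hy1 := Walk.snd_mem_support_of_mem_edges s1 he1
      have hx2 := Walk.fst_mem_support_of_mem_edges s2 he2
      have hy2 := Walk.snd_mem_support_of_mem_edges s2 he2
      have hx := hmeet x hx1 hx2
      have hy := hmeet y hy1 hy2
      have hxy : s(x, y) = s(u, t) := by
        rcases hx with rfl | rfl <;> rcases hy with rfl | rfl
        · exact absurd rfl hadj.ne
        · rfl
        · exact Sym2.eq_swap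
        · exact absurd rfl hadj.ne
      rw [hxy] at he1 he2
      exact hlen ⟨length_eq_one_of_mem_edges h1 he1, length_eq_one_of_mem_edges h2 he2⟩
  have hlen1 : 1 ≤ s1.length := by
    rcases Nat.eq_zero_or_pos s1.length with h | h
    · exact absurd ((Walk.nil_iff_length_eq.mpr h).eq) hne
    · exact h
  have hlen2 : 1 ≤ s2.length := by
    rcases Nat.eq_zero_or_pos s2.length with h | h
    · exact absurd ((Walk.nil_iff_length_eq.mpr h).eq) hne
    · exact h
  constructor
  · constructor
    · constructor
      rw [Walk.edges_append, Walk.edges_reverse]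
      refine List.Nodup.append h1.isTrail.edges_nodup
        (List.nodup_reverse.mpr h2.isTrail.edges_nodup) ?_
      intro e he1 he2
      exact hedisj e he1 (List.mem_reverse.mp he2)
    · intro hnil
      have := congrArg Walk.length hnil
      rw [Walk.length_append, Walk.length_reverse] at this
      simp only [Walk.length_nil] at this
      omega
  · -- support.tail nodup
    have hsupp : (s1.append s2.reverse).support.tail
        = s1.support.tail ++ s2.reverse.support.tail := by
      rw [Walk.support_append, Walk.support_eq_cons s1]
      rfl
    rw [hsupp]
    have hrev : s2.reverse.IsPath := h2.reverse
    have ht1 : s1.support.tail.Nodup := by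
      have h := h1.support_nodup
      rw [Walk.support_eq_cons] at h
      exact h.of_cons
    have ht2 : s2.reverse.support.tail.Nodup := by
      have h := hrev.support_nodup
      rw [Walk.support_eq_cons] at h
      exact h.of_cons
    refine List.Nodup.append ht1 ht2 ?_
    intro x hx1 hx2
    have hxs1 : x ∈ s1.support := List.mem_of_mem_tail hx1
    have hxs2 : x ∈ s2.support := by
      have : x ∈ s2.reverse.support := List.mem_of_mem_tail hx2
      rwa [Walk.support_reverse, List.mem_reverse] at this
    have hxu : x ≠ u := by
      rintro rfl
      have h := h1.support_nodup
      rw [Walk.support_eq_cons] at h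
      exact (List.nodup_cons.mp h).1 hx1
    rcases hmeet x hxs1 hxs2 with rfl | rfl
    · exact hxu rfl
    · have h := hrev.support_nodup
      rw [Walk.support_eq_cons] at h
      exact (List.nodup_cons.mp h).1 hx2

lemma exists_first_mem {b v : V} (S : V → Prop) [DecidablePred S] :
    ∀ (w : G.Walk b v), S v →
      ∃ (t : V) (r : G.Walk b t) (r' : G.Walk t v),
        w = r.append r' ∧ S t ∧ ∀ x ∈ r.support, S x → x = t := by
  intro w
  induction w with
  | nil =>
    intro hv
    exact ⟨_, .nil, .nil, rfl, hv, by simp⟩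
  | @cons a c _ h q ih =>
    intro hv
    by_cases ha : S a
    · exact ⟨a, .nil, .cons h q, rfl, ha, by simp⟩
    · obtain ⟨t, r, r', hdec, hSt, hfirst⟩ := ih hv
      refine ⟨t, .cons h r, r', by rw [Walk.cons_append, hdec], hSt, ?_⟩
      intro x hx hSx
      rw [Walk.support_cons, List.mem_cons] at hx
      rcases hx with rfl | hx
      · exact absurd hSx ha
      · exact hfirst x hx hSx


lemma exists_cycle_decomp [DecidableEq V] :
    ∀ (n : ℕ) {u v : V} (p q : G.Walk u v), p.length ≤ n → p.IsPath → q.IsPath → p ≠ q →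
      ∃ (w t : V) (s1 s2 : G.Walk w t) (pre : G.Walk u w) (o1 o2 : G.Walk t v),
        p = pre.append (s1.append o1) ∧ q = pre.append (s2.append o2) ∧
        1 ≤ s1.length ∧ 1 ≤ s2.length ∧ (s1.append s2.reverse).IsCycle := by
  intro n
  induction n with
  | zero =>
    intro u v p q hn hp hq hne
    have : p.length = 0 := Nat.le_zero.mp hn
    have hnil : p.Nil := Walk.nil_iff_length_eq.mpr this
    have huv : u = v := hnil.eq
    subst huv
    have hpn : p = Walk.nil := hnil.eq_nil
    have hqn : q = Walk.nil := congrArg Subtype.val (SimpleGraph.Path.loop_eq ⟨q, hq⟩)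
    exact absurd (hpn.trans hqn.symm) hne
  | succ n ih =>
    intro u v p q hn hp hq hne
    cases p with
    | nil =>
      have hqn : q = Walk.nil := congrArg Subtype.val (SimpleGraph.Path.loop_eq ⟨q, hq⟩)
      exact absurd hqn.symm hne
    | @cons _ a _ h1 p' =>
      cases q with
      | nil =>
        exact absurd (congrArg Subtype.val
          (SimpleGraph.Path.loop_eq ⟨Walk.cons h1 p', hp⟩)) hne
      | @cons _ b _ h2 q' =>
        by_cases hab : a = b
        · subst hab
          have hpq' : p' ≠ q' := by
            rintro rfl
            exact hne (by rfl)
          have hp' : p'.IsPath := (Walk.cons_isPath_iff h1 p').mp hp |>.1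
          have hq' : q'.IsPath := (Walk.cons_isPath_iff h2 q').mp hq |>.1
          have hn' : p'.length ≤ n := by
            rw [Walk.length_cons] at hn; omega
          obtain ⟨w, t, s1, s2, pre, o1, o2, hd1, hd2, hl1, hl2, hcyc⟩ :=
            ih p' q' hn' hp' hq' hpq'
          exact ⟨w, t, s1, s2, Walk.cons h1 pre, o1, o2,
            by rw [Walk.cons_append, ← hd1],
            by rw [Walk.cons_append, ← hd2], hl1, hl2, hcyc⟩
        · -- divergence at u
          have hup : u ∉ q'.support := ((Walk.cons_isPath_iff h2 q').mp hq).2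
          have hq'path : q'.IsPath := ((Walk.cons_isPath_iff h2 q').mp hq).1
          have hvS : v ∈ (Walk.cons h1 p').support := Walk.end_mem_support _
          obtain ⟨t, r, r'', hdec, htS, hfirst⟩ :=
            exists_first_mem (· ∈ (Walk.cons h1 p').support) q' hvS
          have hut : u ≠ t := by
            rintro rfl
            exact hup (hdec ▸ ((Walk.mem_support_append_iff _ _).mpr (Or.inl r.end_mem_support)))
          set p : G.Walk u v := Walk.cons h1 p' with hpdef
          have hs1path : (p.takeUntil t htS).IsPath := hp.takeUntil htS
          have hrpath : r.IsPath := by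
            have : (r.append r'').IsPath := hdec ▸ hq'path
            exact this.of_append_left
          have hur : u ∉ r.support := fun hx =>
            hup (hdec ▸ ((Walk.mem_support_append_iff _ _).mpr (Or.inl hx)))
          have hs2path : (Walk.cons h2 r).IsPath := by
            cases hdec
            exact (Walk.cons_isPath_iff h2 _).mpr ⟨hrpath, hur⟩
          refine ⟨u, t, p.takeUntil t htS, Walk.cons h2 r, Walk.nil, p.dropUntil t htS, r'',
            by rw [Walk.nil_append, Walk.take_spec],
            by rw [Walk.nil_append, Walk.cons_append, ← hdec],
            ?_, by simp, ?_⟩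
          · rcases Nat.eq_zero_or_pos (p.takeUntil t htS).length with hz | hz
            · exact absurd (Walk.nil_iff_length_eq.mpr hz).eq hut
            · exact hz
          · refine isCycle_append_reverse hs1path hs2path hut ?_ ?_
            · intro x hx1 hx2
              rw [Walk.support_cons, List.mem_cons] at hx2
              rcases hx2 with rfl | hx2
              · exact Or.inl rfl
              · exact Or.inr (hfirst x hx2 (Walk.support_takeUntil_subset _ htS hx1))
            · rintro ⟨hl1, hl2⟩
              -- s2 length 1 means r is nil, so t = b
              have hrlen : r.length = 0 := by
                have := hl2
                rw [Walk.length_cons] at this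
                omega
              have hbt : b = t := (Walk.nil_iff_length_eq.mpr hrlen).eq
              -- s1 length 1 means a = t
              have hat : a = t := by
                have hspec := Walk.take_spec p htS
                have := congrArg (fun w => Walk.getVert w 1) hspec
                rw [Walk.getVert_append] at this
                rw [hl1] at this
                simp only [Nat.lt_irrefl, if_false, Nat.sub_self, Walk.getVert_zero] at this
                have hpa : p.getVert 1 = a := by
                  rw [hpdef]
                  exact Walk.getVert_cons_succ p' h1 ▸ p'.getVert_zero
                rw [hpa] at this
                exact this.symm ▸ rfl
              exact hab (hat.trans hbt.symm)

lemma segment_length (hconn : G.Connected) {u v w t : V}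
    (pre : G.Walk u w) (s1 : G.Walk w t) (o1 : G.Walk t v)
    (hlen : pre.length + s1.length + o1.length = G.dist u v) :
    pre.length + s1.length = G.dist u t := by
  have h1 : G.dist u t ≤ pre.length + s1.length := by
    have := SimpleGraph.dist_le (pre.append s1)
    rwa [Walk.length_append] at this
  have h2 : G.dist t v ≤ o1.length := SimpleGraph.dist_le o1
  have h3 : G.dist u v ≤ G.dist u t + G.dist t v := hconn.dist_triangle
  omega

/-- Two distinct geodesics between the same pair of vertices yield an even cycle. -/
lemma exists_even_cycle [DecidableEq V] (hconn : G.Connected) {u v : V}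
    (p q : G.Walk u v) (hp : p.IsPath) (hq : q.IsPath)
    (hlp : p.length = G.dist u v) (hlq : q.length = G.dist u v) (hne : p ≠ q) :
    ∃ (x : V) (c : G.Walk x x), c.IsCycle ∧ Even c.length := by
  obtain ⟨w, t, s1, s2, pre, o1, o2, hd1, hd2, hl1, hl2, hcyc⟩ :=
    exists_cycle_decomp p.length p q le_rfl hp hq hne
  refine ⟨w, s1.append s2.reverse, hcyc, ?_⟩
  have hlen1 : pre.length + s1.length + o1.length = G.dist u v := by
    rw [← hlp, hd1, Walk.length_append, Walk.length_append]
    omega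
  have hlen2 : pre.length + s2.length + o2.length = G.dist u v := by
    rw [← hlq, hd2, Walk.length_append, Walk.length_append]
    omega
  have e1 := segment_length hconn pre s1 o1 hlen1
  have e2 := segment_length hconn pre s2 o2 hlen2
  have : s1.length = s2.length := by omega
  rw [Walk.length_append, Walk.length_reverse, this]
  exact ⟨s2.length, by omega⟩

lemma geodesics_finite [Fintype V] (G : SimpleGraph V) (u v : V) :
    {p : G.Walk u v | p.IsPath ∧ p.length = G.dist u v}.Finite := by
  classical
  refine Set.Finite.of_finite_image ?_ (Walk.edges_injective.injOn)
  refine Set.Finite.subset (List.finite_length_le (α := Sym2 V) (G.dist u v)) ?_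
  rintro l ⟨p, ⟨-, hl⟩, rfl⟩
  simp only [Set.mem_setOf_eq, Walk.length_edges]
  omega

lemma two_le_numGeodesics_of_even_cycle [Fintype V] [DecidableEq V]
    {G : SimpleGraph V} (hG : IsCactus G) {x : V} (c : G.Walk x x)
    (hc : c.IsCycle) (hev : Even c.length) :
    ∃ u v : V, u ≠ v ∧ 2 ≤ numGeodesics G u v := by
  obtain ⟨m, hm⟩ := hev
  have h3 := hc.three_le_length
  have hm2 : 2 ≤ m := by omega
  set v := c.getVert m with hvdef
  set s1 := takeW c m with hs1def
  set s2 := dropW c m with hs2def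
  have hsplit : s1.append s2 = c := takeW_append_dropW c m
  have len1 : s1.length = m := length_takeW c m (by omega)
  have len2 : s2.length = m := by
    have := congrArg Walk.length hsplit
    rw [Walk.length_append] at this
    omega
  have hsupp : s1.support ++ s2.support.tail = c.support := by
    have := congrArg Walk.support hsplit
    rwa [Walk.support_append] at this
  have htail : c.support.tail = s1.support.tail ++ s2.support.tail := by
    rw [← hsupp, Walk.support_eq_cons s1, List.cons_append, List.tail_cons]
    rfl
  have nds : (s1.support.tail ++ s2.support.tail).Nodup := htail ▸ hc.support_nodup
  obtain ⟨nd1, nd2, hdisj⟩ := List.nodup_append'.mp nds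
  have hx2 : x ∈ s2.support.tail := end_mem_support_tail s2 (by omega)
  have hv1 : v ∈ s1.support.tail := end_mem_support_tail s1 (by omega)
  have hxv : x ≠ v := fun h => hdisj (by rwa [← h] at hv1) hx2
  have hs1path : s1.IsPath := by
    rw [Walk.isPath_def, Walk.support_eq_cons s1]
    exact List.nodup_cons.mpr ⟨fun hx1 => hdisj hx1 hx2, nd1⟩
  have hs2path : s2.IsPath := by
    rw [Walk.isPath_def, Walk.support_eq_cons s2]
    exact List.nodup_cons.mpr ⟨fun hv2 => hdisj hv1 hv2, nd2⟩
  have hcedges : c.edges = s1.edges ++ s2.edges := by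
    conv_lhs => rw [← hsplit]
    rw [Walk.edges_append]
  have hdle : G.dist x v ≤ m := by
    have := SimpleGraph.dist_le s1
    change G.dist x (c.getVert m) ≤ m
    omega
  have hdge : ¬ G.dist x v < m := by
    intro hlt
    obtain ⟨P, hPpath, hPlen⟩ := hG.1.exists_path_of_dist x v
    have hPne : P ≠ s1 := by
      intro h
      rw [h, len1] at hPlen
      omega
    obtain ⟨w, t, t1, t2, pre, o1, o2, hdP, hds1, hl1, hl2, hcyc'⟩ :=
      exists_cycle_decomp P.length P s1 le_rfl hPpath hs1path hPne
    have hlt1 : t1.length ≤ P.length := by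
      have := congrArg Walk.length hdP
      rw [Walk.length_append, Walk.length_append] at this
      omega
    have hlt2 : t2.length ≤ m := by
      have := congrArg Walk.length hds1
      rw [Walk.length_append, Walk.length_append] at this
      omega
    have hedges2 : ∀ e ∈ t2.edges, e ∈ c.edges := by
      intro e he
      have h1 : e ∈ s1.edges := by
        rw [hds1, Walk.edges_append, Walk.edges_append]
        exact List.mem_append.mpr (Or.inr (List.mem_append.mpr (Or.inl he)))
      rw [hcedges]
      exact List.mem_append.mpr (Or.inl h1)
    have ht2ne : t2.edges ≠ [] := by
      intro h
      have := congrArg List.length h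
      rw [Walk.length_edges] at this
      simp only [List.length_nil] at this
      omega
    obtain ⟨e, he⟩ := List.exists_mem_of_ne_nil _ ht2ne
    have heC' : e ∈ (t1.append t2.reverse).edges := by
      rw [Walk.edges_append, Walk.edges_reverse]
      exact List.mem_append.mpr (Or.inr (List.mem_reverse.mpr he))
    have hA : {e | e ∈ (t1.append t2.reverse).edges} ∈ cycleEdgeSets G :=
      ⟨w, t1.append t2.reverse, hcyc', rfl⟩
    have hB : {e | e ∈ c.edges} ∈ cycleEdgeSets G := ⟨x, c, hc, rfl⟩
    by_cases hAB : {e | e ∈ (t1.append t2.reverse).edges} = {e | e ∈ c.edges}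
    · have hfin : (t1.append t2.reverse).edges.toFinset = c.edges.toFinset := by
        ext f
        simpa using Set.ext_iff.mp hAB f
      have hcard := congrArg Finset.card hfin
      rw [List.toFinset_card_of_nodup hcyc'.isCircuit.isTrail.edges_nodup,
        List.toFinset_card_of_nodup hc.isCircuit.isTrail.edges_nodup,
        Walk.length_edges, Walk.length_edges, Walk.length_append,
        Walk.length_reverse] at hcard
      omega
    · have hdisjAB := hG.2 hA hB hAB
      exact (Set.disjoint_left.mp hdisjAB heC') (hedges2 e he)
  have hdist : G.dist x v = m := le_antisymm hdle (not_lt.mp hdge)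
  have hg1 : s1 ∈ {p : G.Walk x v | p.IsPath ∧ p.length = G.dist x v} :=
    ⟨hs1path, by omega⟩
  have hg2 : s2.reverse ∈ {p : G.Walk x v | p.IsPath ∧ p.length = G.dist x v} :=
    ⟨hs2path.reverse, by rw [Walk.length_reverse]; omega⟩
  have hne12 : s1 ≠ s2.reverse := by
    intro h
    have hce : c.edges = s2.edges.reverse ++ s2.edges := by
      rw [hcedges, h, Walk.edges_reverse]
    have hs2ne : s2.edges ≠ [] := by
      intro hnil
      have := congrArg List.length hnil
      rw [Walk.length_edges] at this
      simp only [List.length_nil] at this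
      omega
    obtain ⟨f, hf⟩ := List.exists_mem_of_ne_nil _ hs2ne
    have hnd := hc.isCircuit.isTrail.edges_nodup
    rw [hce] at hnd
    exact (List.nodup_append'.mp hnd).2.2 (List.mem_reverse.mpr hf) hf
  refine ⟨x, v, hxv, ?_⟩
  have : 1 < numGeodesics G x v := by
    rw [numGeodesics, Set.one_lt_ncard (geodesics_finite G x v)]
    exact ⟨s1, hg1, s2.reverse, hg2, hne12⟩
  omega

lemma one_le_numGeodesics [Fintype V] {G : SimpleGraph V} (hconn : G.Connected)
    (u v : V) : 1 ≤ numGeodesics G u v := by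
  obtain ⟨p, hp, hl⟩ := hconn.exists_path_of_dist u v
  rw [numGeodesics]
  exact (Set.ncard_pos (geodesics_finite G u v)).mpr ⟨p, hp, hl⟩

lemma numGeodesics_eq_one [Fintype V] [DecidableEq V] {G : SimpleGraph V}
    (hconn : G.Connected)
    (hodd : ∀ (w : V) (c : G.Walk w w), c.IsCycle → Odd c.length)
    (u v : V) : numGeodesics G u v = 1 := by
  obtain ⟨p, hp, hl⟩ := hconn.exists_path_of_dist u v
  have hsub : {q : G.Walk u v | q.IsPath ∧ q.length = G.dist u v} = {p} := by
    ext q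
    simp only [Set.mem_setOf_eq, Set.mem_singleton_iff]
    constructor
    · rintro ⟨hq, hlq⟩
      by_contra hne
      obtain ⟨w, c, hcyc, hev⟩ := exists_even_cycle hconn q p hq hp hlq hl hne
      have := hodd w c hcyc
      exact (Nat.not_even_iff_odd.mpr this) hev
    · rintro rfl
      exact ⟨hp, hl⟩
  rw [numGeodesics, hsub, Set.ncard_singleton]

end CactusAux

/-- a cactus on `n` vertices with `k` cycles satisfies
`gpn(G) ≥ binom(n+1,2)`, with equality iff every cycle has odd length. -/
theorem gpn_cactus_lower_bound {V : Type*} [Fintype V] [DecidableEq V]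
    (G : SimpleGraph V) (k : ℕ) (hG : IsCactus G) (hk : (cycleEdgeSets G).ncard = k) :
    (Fintype.card V + 1).choose 2 ≤ gpn G ∧
      (gpn G = (Fintype.card V + 1).choose 2 ↔
        ∀ (u : V) (c : G.Walk u u), c.IsCycle → Odd c.length) := by
  classical
  obtain ⟨hconn, hpair⟩ := hG
  set F := Finset.univ.filter (fun e : Sym2 V => ¬ e.IsDiag) with hF
  set f := Sym2.lift ⟨fun u v => numGeodesics G u v,
    fun u v => numGeodesics_comm G u v⟩ with hf
  have hcard : F.card = (Fintype.card V).choose 2 := by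
    rw [hF, ← Fintype.card_subtype, Sym2.card_subtype_not_diag]
  have hge1 : ∀ e ∈ F, 1 ≤ f e := by
    intro e _
    induction e using Sym2.ind with
    | _ a b =>
      rw [hf, Sym2.lift_mk]
      exact CactusAux.one_le_numGeodesics hconn a b
  have hsum_ge : F.card ≤ ∑ e ∈ F, f e := by
    calc F.card = ∑ _e ∈ F, 1 := by rw [Finset.sum_const, smul_eq_mul, mul_one]
    _ ≤ ∑ e ∈ F, f e := Finset.sum_le_sum hge1
  have hbinom : (Fintype.card V + 1).choose 2
      = (Fintype.card V).choose 2 + Fintype.card V := by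
    rw [Nat.choose_succ_succ, Nat.choose_one_right, Nat.add_comm]
  have hgpn : gpn G = (∑ e ∈ F, f e) + Fintype.card V := rfl
  constructor
  · rw [hgpn, hbinom]
    exact Nat.add_le_add_right (hcard ▸ hsum_ge) _
  · have hiff1 : gpn G = (Fintype.card V + 1).choose 2 ↔ ∀ e ∈ F, f e = 1 := by
      rw [hgpn, hbinom]
      have hone : (∑ _e ∈ F, (1 : ℕ)) = (Fintype.card V).choose 2 := by
        rw [Finset.sum_const, smul_eq_mul, mul_one, hcard]
      constructor
      · intro h
        have hsum : (∑ _e ∈ F, (1 : ℕ)) = ∑ e ∈ F, f e := by omega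
        intro e he
        exact ((Finset.sum_eq_sum_iff_of_le hge1).mp hsum e he).symm
      · intro h
        have : (∑ e ∈ F, f e) = ∑ _e ∈ F, (1 : ℕ) := Finset.sum_congr rfl h
        omega
    rw [hiff1]
    constructor
    · intro h w c hcyc
      by_contra hodd
      have hev : Even c.length := Nat.not_odd_iff_even.mp hodd
      obtain ⟨a, b, hab, h2⟩ :=
        CactusAux.two_le_numGeodesics_of_even_cycle ⟨hconn, hpair⟩ c hcyc hev
      have hmem : s(a, b) ∈ F := by
        rw [hF, Finset.mem_filter]
        exact ⟨Finset.mem_univ _, by rwa [Sym2.mk_isDiag_iff]⟩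
      have h1 : numGeodesics G a b = 1 := by
        have := h s(a, b) hmem
        rwa [hf, Sym2.lift_mk] at this
      omega
    · intro hodd e _
      induction e using Sym2.ind with
      | _ a b =>
        rw [hf, Sym2.lift_mk]
        exact CactusAux.numGeodesics_eq_one hconn hodd a b
end
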